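/- Let η₁ ≠ η₂ be nonnegative reals, let ξ ∈ ℝ²₊ with ξ ≺ (η₁, η₂), with ξ₁ ≠ η₁ and ξ₂ ≠ η₁, and let u, u′ ∈ ℂ² be unit vectors. Then there exist unit vectors w, w′ ∈ ℂ² with w = σu + τu′ for scalars σ, τ such that ξ₁ w⊗w + ξ₂ w′⊗w′ = η₁ u⊗u + η₂ u′⊗u′, |σ|² + |τ|² ≤ 1, and |σ|² ≤ η₁(η₁−ξ₂)/(ξ₁(η₁−η₂)). -/

import Mathlib

open ContinuousLinearMap

/-- The rank-one operator `x ↦ ⟪v, x⟫ • v` on `ℂ²`. -/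
noncomputable def rankOneProj (v : EuclideanSpace ℂ (Fin 2)) :
    EuclideanSpace ℂ (Fin 2) →L[ℂ] EuclideanSpace ℂ (Fin 2) :=
  (innerSL ℂ v).smulRight v

private lemma rankOneProj_combo (ξ₁ ξ₂ η₁ η₂ : ℝ) (σ τ σ' τ' : ℂ)
    (u u' : EuclideanSpace ℂ (Fin 2))
    (h1 : (ξ₁:ℂ) * (σ * (starRingEnd ℂ) σ) + ξ₂ * (σ' * (starRingEnd ℂ) σ') = η₁)
    (h2 : (ξ₁:ℂ) * (σ * (starRingEnd ℂ) τ) + ξ₂ * (σ' * (starRingEnd ℂ) τ') = 0)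
    (h3 : (ξ₁:ℂ) * (τ * (starRingEnd ℂ) σ) + ξ₂ * (τ' * (starRingEnd ℂ) σ') = 0)
    (h4 : (ξ₁:ℂ) * (τ * (starRingEnd ℂ) τ) + ξ₂ * (τ' * (starRingEnd ℂ) τ') = η₂) :
    ξ₁ • rankOneProj (σ • u + τ • u') + ξ₂ • rankOneProj (σ' • u + τ' • u')
      = η₁ • rankOneProj u + η₂ • rankOneProj u' := by
  refine ContinuousLinearMap.ext fun x => ?_
  simp only [rankOneProj, ContinuousLinearMap.add_apply, ContinuousLinearMap.smul_apply,
    ContinuousLinearMap.smulRight_apply, innerSL_apply_apply, inner_add_left, inner_smul_left,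
    RCLike.real_smul_eq_coe_smul (K := ℂ)]
  set a : ℂ := inner ℂ u x with ha
  set b : ℂ := inner ℂ u' x with hb
  have hA : (ξ₁:ℂ)*(((starRingEnd ℂ) σ * a + (starRingEnd ℂ) τ * b)*σ)
      + (ξ₂:ℂ)*(((starRingEnd ℂ) σ' * a + (starRingEnd ℂ) τ' * b)*σ') = (η₁:ℂ)*a := by
    linear_combination a*h1 + b*h2
  have hB : (ξ₁:ℂ)*(((starRingEnd ℂ) σ * a + (starRingEnd ℂ) τ * b)*τ)
      + (ξ₂:ℂ)*(((starRingEnd ℂ) σ' * a + (starRingEnd ℂ) τ' * b)*τ') = (η₂:ℂ)*b := by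
    linear_combination a*h3 + b*h4
  calc (ξ₁:ℂ) • (((starRingEnd ℂ) σ * a + (starRingEnd ℂ) τ * b) • (σ • u + τ • u'))
        + (ξ₂:ℂ) • (((starRingEnd ℂ) σ' * a + (starRingEnd ℂ) τ' * b) • (σ' • u + τ' • u'))
      = ((ξ₁:ℂ)*(((starRingEnd ℂ) σ * a + (starRingEnd ℂ) τ * b)*σ)
          + (ξ₂:ℂ)*(((starRingEnd ℂ) σ' * a + (starRingEnd ℂ) τ' * b)*σ')) • u
        + ((ξ₁:ℂ)*(((starRingEnd ℂ) σ * a + (starRingEnd ℂ) τ * b)*τ)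
          + (ξ₂:ℂ)*(((starRingEnd ℂ) σ' * a + (starRingEnd ℂ) τ' * b)*τ')) • u' := by
        module
    _ = ((η₁:ℂ)*a) • u + ((η₂:ℂ)*b) • u' := by rw [hA, hB]
    _ = (η₁:ℂ) • (a • u) + (η₂:ℂ) • (b • u') := by module

private lemma unit_combo (u u' : EuclideanSpace ℂ (Fin 2)) (hu : ‖u‖ = 1) (hu' : ‖u'‖ = 1)
    (σ τ : ℂ) (hre : ((starRingEnd ℂ) σ * (τ * (inner ℂ u u' : ℂ))).re = 0)
    (hst : ‖σ‖ ^ 2 + ‖τ‖ ^ 2 = 1) : ‖σ • u + τ • u'‖ = 1 := by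
  have h := norm_add_sq (𝕜 := ℂ) (σ • u) (τ • u')
  rw [inner_smul_left, inner_smul_right] at h
  rw [norm_smul, norm_smul, hu, hu'] at h
  have hre' : RCLike.re ((starRingEnd ℂ) σ * (τ * (inner ℂ u u' : ℂ))) = 0 := hre
  rw [hre'] at h
  have hn : ‖σ • u + τ • u'‖ ^ 2 = 1 := by
    rw [h]; simp only [mul_one]; linarith [hst]
  nlinarith [norm_nonneg (σ • u + τ • u'), hn]

private lemma phase_exists (c : ℂ) : ∃ φ : ℂ, φ * (starRingEnd ℂ) φ = 1 ∧ (φ * c).re = 0 := by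
  by_cases hc : c = 0
  · exact ⟨1, by simp, by simp [hc]⟩
  · have hnc : (‖c‖ : ℂ) ≠ 0 := by simpa using norm_ne_zero_iff.mpr hc
    set φ : ℂ := Complex.I * (starRingEnd ℂ) c / (‖c‖ : ℂ) with hφdef
    have hnφ : ‖φ‖ = 1 := by
      rw [hφdef, norm_div, norm_mul, Complex.norm_I, one_mul, RCLike.norm_conj,
        Complex.norm_real, Real.norm_eq_abs, abs_of_nonneg (norm_nonneg c)]
      exact div_self (norm_ne_zero_iff.mpr hc)
    have hmul : φ * (starRingEnd ℂ) φ = 1 := by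
      rw [Complex.mul_conj, Complex.normSq_eq_norm_sq, hnφ]
      norm_num
    have hconjmul : (starRingEnd ℂ) c * c = ((‖c‖ ^ 2 : ℝ) : ℂ) := by
      exact_mod_cast RCLike.conj_mul c
    have hφc : φ * c = Complex.I * ((‖c‖ : ℝ) : ℂ) := by
      rw [hφdef, div_mul_eq_mul_div, mul_assoc, hconjmul]
      rw [div_eq_iff hnc]
      push_cast
      ring
    refine ⟨φ, hmul, ?_⟩
    rw [hφc]
    simp [Complex.mul_re]

theorem stmt13_aux (η₁ η₂ ξ₁ ξ₂ s : ℝ) (hsum : ξ₁ + ξ₂ = η₁ + η₂)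
    (hx1 : 0 < ξ₁) (hx2 : 0 < ξ₂)
    (hkey : ξ₁ * s * (η₁ - η₂) = η₁ * (η₁ - ξ₂))
    (hs0 : 0 ≤ s) (hs1 : s ≤ 1)
    (h1 : 0 ≤ η₁ - ξ₁ * s) (h2 : η₁ - ξ₁ * s ≤ ξ₂)
    (u u' : EuclideanSpace ℂ (Fin 2)) (hu : ‖u‖ = 1) (hu' : ‖u'‖ = 1) :
    ∃ (w w' : EuclideanSpace ℂ (Fin 2)) (σ τ : ℂ),
      ‖w‖ = 1 ∧ ‖w'‖ = 1 ∧ w = σ • u + τ • u' ∧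
      ξ₁ • rankOneProj w + ξ₂ • rankOneProj w'
        = η₁ • rankOneProj u + η₂ • rankOneProj u' ∧
      ‖σ‖ ^ 2 + ‖τ‖ ^ 2 ≤ 1 ∧
      ‖σ‖ ^ 2 ≤ s := by
  set s' : ℝ := (η₁ - ξ₁ * s) / ξ₂ with hs'def
  have hY : ξ₂ * s' = η₁ - ξ₁ * s := by
    rw [hs'def]; field_simp
  have hs'0 : 0 ≤ s' := div_nonneg h1 hx2.le
  have hs'1 : s' ≤ 1 := by rw [hs'def, div_le_one hx2]; exact h2
  have hE1 : ξ₁ * s + ξ₂ * s' = η₁ := by linarith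
  have hE4 : ξ₁ * (1 - s) + ξ₂ * (1 - s') = η₂ := by nlinarith [hY]
  have hE2sq : ξ₁ ^ 2 * (s * (1 - s)) = ξ₂ ^ 2 * (s' * (1 - s')) := by
    linear_combination (η₁ - ξ₁*s - ξ₂ + ξ₂*s') * hY - hkey + (ξ₁*s) * hsum
  have sqrt_helper : ∀ (c t : ℝ), 0 ≤ c → 0 ≤ t → t ≤ 1 →
      c * (Real.sqrt t * Real.sqrt (1 - t)) = Real.sqrt (c ^ 2 * (t * (1 - t))) := by
    intro c t hc ht ht1
    rw [Real.sqrt_mul (sq_nonneg c), Real.sqrt_sq hc, Real.sqrt_mul ht]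
  have hE2 : ξ₁ * (Real.sqrt s * Real.sqrt (1 - s))
      = ξ₂ * (Real.sqrt s' * Real.sqrt (1 - s')) := by
    rw [sqrt_helper ξ₁ s hx1.le hs0 hs1, sqrt_helper ξ₂ s' hx2.le hs'0 hs'1, hE2sq]
  -- phase
  obtain ⟨φ, hφmul, hφre⟩ := phase_exists (inner ℂ u u' : ℂ)
  set c : ℂ := (inner ℂ u u' : ℂ) with hc
  set σ : ℂ := ((Real.sqrt s : ℝ) : ℂ) with hσ
  set τ : ℂ := ((Real.sqrt (1 - s) : ℝ) : ℂ) * φ with hτ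
  set σ' : ℂ := ((Real.sqrt s' : ℝ) : ℂ) with hσ'
  set τ' : ℂ := -(((Real.sqrt (1 - s') : ℝ) : ℂ) * φ) with hτ'
  have hφconj : (starRingEnd ℂ) φ * φ = 1 := by rw [mul_comm]; exact hφmul
  have hmss : (Real.sqrt s : ℝ) * Real.sqrt s = s := Real.mul_self_sqrt hs0
  have hmst : (Real.sqrt (1-s) : ℝ) * Real.sqrt (1-s) = 1 - s :=
    Real.mul_self_sqrt (by linarith)
  have hmss' : (Real.sqrt s' : ℝ) * Real.sqrt s' = s' := Real.mul_self_sqrt hs'0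
  have hmst' : (Real.sqrt (1-s') : ℝ) * Real.sqrt (1-s') = 1 - s' :=
    Real.mul_self_sqrt (by linarith)
  have c1 : ((Real.sqrt s : ℝ) : ℂ) * ((Real.sqrt s : ℝ) : ℂ) = ((s : ℝ) : ℂ) := by
    norm_cast
  have c2 : ((Real.sqrt (1-s) : ℝ) : ℂ) * ((Real.sqrt (1-s) : ℝ) : ℂ) = ((1 - s : ℝ) : ℂ) := by
    norm_cast
  have c3 : ((Real.sqrt s' : ℝ) : ℂ) * ((Real.sqrt s' : ℝ) : ℂ) = ((s' : ℝ) : ℂ) := by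
    norm_cast
  have c4 : ((Real.sqrt (1-s') : ℝ) : ℂ) * ((Real.sqrt (1-s') : ℝ) : ℂ) = ((1 - s' : ℝ) : ℂ) := by
    norm_cast
  have hE1C : (ξ₁ : ℂ) * ((s : ℝ) : ℂ) + (ξ₂ : ℂ) * ((s' : ℝ) : ℂ) = ((η₁ : ℝ) : ℂ) := by
    exact_mod_cast hE1
  have hE4C : (ξ₁ : ℂ) * ((1 - s : ℝ) : ℂ) + (ξ₂ : ℂ) * ((1 - s' : ℝ) : ℂ) = ((η₂ : ℝ) : ℂ) := by
    exact_mod_cast hE4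
  have hE2C : (ξ₁ : ℂ) * (((Real.sqrt s : ℝ) : ℂ) * ((Real.sqrt (1-s) : ℝ) : ℂ))
      = (ξ₂ : ℂ) * (((Real.sqrt s' : ℝ) : ℂ) * ((Real.sqrt (1-s') : ℝ) : ℂ)) := by
    exact_mod_cast hE2
  have hid1 : (ξ₁:ℂ) * (σ * (starRingEnd ℂ) σ) + ξ₂ * (σ' * (starRingEnd ℂ) σ') = η₁ := by
    simp only [hσ, hσ', Complex.conj_ofReal]
    linear_combination (ξ₁ : ℂ) * c1 + (ξ₂ : ℂ) * c3 + hE1C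
  have hid2 : (ξ₁:ℂ) * (σ * (starRingEnd ℂ) τ) + ξ₂ * (σ' * (starRingEnd ℂ) τ') = 0 := by
    simp only [hσ, hσ', hτ, hτ', map_neg, map_mul, Complex.conj_ofReal]
    linear_combination ((starRingEnd ℂ) φ) * hE2C
  have hid3 : (ξ₁:ℂ) * (τ * (starRingEnd ℂ) σ) + ξ₂ * (τ' * (starRingEnd ℂ) σ') = 0 := by
    simp only [hσ, hσ', hτ, hτ', Complex.conj_ofReal]
    linear_combination φ * hE2C
  have hid4 : (ξ₁:ℂ) * (τ * (starRingEnd ℂ) τ) + ξ₂ * (τ' * (starRingEnd ℂ) τ') = η₂ := by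
    simp only [hσ, hσ', hτ, hτ', map_neg, map_mul, Complex.conj_ofReal]
    linear_combination (ξ₁ : ℂ) * ((Real.sqrt (1-s) : ℝ) : ℂ) * ((Real.sqrt (1-s) : ℝ) : ℂ) * hφmul
      + (ξ₂ : ℂ) * ((Real.sqrt (1-s') : ℝ) : ℂ) * ((Real.sqrt (1-s') : ℝ) : ℂ) * hφmul
      + (ξ₁ : ℂ) * c2 + (ξ₂ : ℂ) * c4 + hE4C
  -- norms
  have hnσ : ‖σ‖ ^ 2 = s := by
    rw [hσ, Complex.norm_real, Real.norm_eq_abs, sq_abs, Real.sq_sqrt hs0]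
  have hnφ : ‖φ‖ = 1 := by
    have h2 : Complex.normSq φ = 1 := by
      have h3 := hφmul
      rw [Complex.mul_conj] at h3
      exact_mod_cast h3
    have h4 : ‖φ‖ ^ 2 = 1 := by rw [Complex.sq_norm]; exact h2
    nlinarith [norm_nonneg φ]
  have hnτ : ‖τ‖ ^ 2 = 1 - s := by
    rw [hτ, norm_mul, hnφ, mul_one, Complex.norm_real, Real.norm_eq_abs, sq_abs,
      Real.sq_sqrt (by linarith)]
  have hnσ' : ‖σ'‖ ^ 2 = s' := by
    rw [hσ', Complex.norm_real, Real.norm_eq_abs, sq_abs, Real.sq_sqrt hs'0]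
  have hnτ' : ‖τ'‖ ^ 2 = 1 - s' := by
    rw [hτ', norm_neg, norm_mul, hnφ, mul_one, Complex.norm_real, Real.norm_eq_abs, sq_abs,
      Real.sq_sqrt (by linarith)]
  have hre : ((starRingEnd ℂ) σ * (τ * c)).re = 0 := by
    have hexp : (starRingEnd ℂ) σ * (τ * c)
        = ((Real.sqrt s * Real.sqrt (1-s) : ℝ) : ℂ) * (φ * c) := by
      rw [hσ, hτ, Complex.conj_ofReal]
      push_cast
      ring
    rw [hexp, Complex.re_ofReal_mul, hφre, mul_zero]
  have hre' : ((starRingEnd ℂ) σ' * (τ' * c)).re = 0 := by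
    have hexp : (starRingEnd ℂ) σ' * (τ' * c)
        = ((-(Real.sqrt s' * Real.sqrt (1-s')) : ℝ) : ℂ) * (φ * c) := by
      rw [hσ', hτ', Complex.conj_ofReal]
      push_cast
      ring
    rw [hexp, Complex.re_ofReal_mul, hφre, mul_zero]
  rw [hc] at hre hre'
  have hw : ‖σ • u + τ • u'‖ = 1 := by
    apply unit_combo u u' hu hu' σ τ hre
    rw [hnσ, hnτ]; ring
  have hw' : ‖σ' • u + τ' • u'‖ = 1 := by
    apply unit_combo u u' hu hu' σ' τ' hre'
    rw [hnσ', hnτ']; ring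
  refine ⟨σ • u + τ • u', σ' • u + τ' • u', σ, τ, hw, hw', rfl,
    rankOneProj_combo ξ₁ ξ₂ η₁ η₂ σ τ σ' τ' u u' hid1 hid2 hid3 hid4, ?_, ?_⟩
  · rw [hnσ, hnτ]; norm_num
  · rw [hnσ]

theorem stmt13 (η₁ η₂ ξ₁ ξ₂ : ℝ)
    (hη₁ : 0 ≤ η₁) (hη₂ : 0 ≤ η₂) (hξ₁ : 0 ≤ ξ₁) (hξ₂ : 0 ≤ ξ₂)
    (hne : η₁ ≠ η₂) (hξ₁η₁ : ξ₁ ≠ η₁) (hξ₂η₁ : ξ₂ ≠ η₁)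
    (hmaj : max ξ₁ ξ₂ ≤ max η₁ η₂ ∧ ξ₁ + ξ₂ = η₁ + η₂)
    (u u' : EuclideanSpace ℂ (Fin 2)) (hu : ‖u‖ = 1) (hu' : ‖u'‖ = 1) :
    ∃ (w w' : EuclideanSpace ℂ (Fin 2)) (σ τ : ℂ),
      ‖w‖ = 1 ∧ ‖w'‖ = 1 ∧ w = σ • u + τ • u' ∧
      ξ₁ • rankOneProj w + ξ₂ • rankOneProj w'
        = η₁ • rankOneProj u + η₂ • rankOneProj u' ∧
      ‖σ‖ ^ 2 + ‖τ‖ ^ 2 ≤ 1 ∧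
      ‖σ‖ ^ 2 ≤ η₁ * (η₁ - ξ₂) / (ξ₁ * (η₁ - η₂)) := by
  obtain ⟨hmax, hsum⟩ := hmaj
  set s : ℝ := η₁ * (η₁ - ξ₂) / (ξ₁ * (η₁ - η₂)) with hsdef
  have hDne : η₁ - η₂ ≠ 0 := sub_ne_zero.mpr hne
  rcases lt_or_gt_of_ne hne with hlt | hgt
  · -- η₁ < η₂
    have hmx : max η₁ η₂ = η₂ := max_eq_right hlt.le
    have hx1le : ξ₁ ≤ η₂ := le_trans (le_max_left ξ₁ ξ₂) (by rwa [hmx] at hmax)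
    have hx2le : ξ₂ ≤ η₂ := le_trans (le_max_right ξ₁ ξ₂) (by rwa [hmx] at hmax)
    have hx1ge : η₁ ≤ ξ₁ := by linarith
    have hx2ge : η₁ ≤ ξ₂ := by linarith
    have hx1gt : η₁ < ξ₁ := lt_of_le_of_ne hx1ge (Ne.symm hξ₁η₁)
    have hx2gt : η₁ < ξ₂ := lt_of_le_of_ne hx2ge (Ne.symm hξ₂η₁)
    have hx1p : 0 < ξ₁ := lt_of_le_of_lt hη₁ hx1gt
    have hx2p : 0 < ξ₂ := lt_of_le_of_lt hη₁ hx2gt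
    have hkey : ξ₁ * s * (η₁ - η₂) = η₁ * (η₁ - ξ₂) := by
      rw [hsdef]; field_simp
    have hs0 : 0 ≤ s := by
      rw [hsdef]
      rw [div_nonneg_iff]
      right
      constructor
      · exact mul_nonpos_of_nonneg_of_nonpos hη₁ (by linarith)
      · exact (mul_neg_of_pos_of_neg hx1p (by linarith)).le
    have hs1 : s ≤ 1 := by
      rw [hsdef, div_le_one_iff]
      right; right
      constructor
      · exact mul_neg_of_pos_of_neg hx1p (by linarith)
      · nlinarith [mul_nonneg hη₂ (sub_nonneg.2 hx1ge)]
    have h1 : 0 ≤ η₁ - ξ₁ * s := by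
      nlinarith [hkey, mul_nonneg hη₁ (by linarith : (0:ℝ) ≤ η₂ - ξ₂), hlt]
    have h2 : η₁ - ξ₁ * s ≤ ξ₂ := by
      nlinarith [hkey, mul_nonneg hη₂ (by linarith : (0:ℝ) ≤ ξ₂ - η₁), hlt]
    exact stmt13_aux η₁ η₂ ξ₁ ξ₂ s hsum hx1p hx2p hkey hs0 hs1 h1 h2 u u' hu hu'
  · -- η₂ < η₁
    have hmx : max η₁ η₂ = η₁ := max_eq_left hgt.le
    have hx1le : ξ₁ ≤ η₁ := le_trans (le_max_left ξ₁ ξ₂) (by rwa [hmx] at hmax)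
    have hx2le : ξ₂ ≤ η₁ := le_trans (le_max_right ξ₁ ξ₂) (by rwa [hmx] at hmax)
    have hx1lt : ξ₁ < η₁ := lt_of_le_of_ne hx1le hξ₁η₁
    have hx2lt : ξ₂ < η₁ := lt_of_le_of_ne hx2le hξ₂η₁
    have hx1p : 0 < ξ₁ := by linarith
    have hx2p : 0 < ξ₂ := by linarith
    have hkey : ξ₁ * s * (η₁ - η₂) = η₁ * (η₁ - ξ₂) := by
      rw [hsdef]; field_simp
    have hs0 : 0 ≤ s := by
      rw [hsdef]
      exact div_nonneg (mul_nonneg hη₁ (by linarith)) (mul_pos hx1p (sub_pos.2 hgt)).le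
    have hs1 : s ≤ 1 := by
      rw [hsdef, div_le_one (mul_pos hx1p (sub_pos.2 hgt))]
      nlinarith [mul_nonneg hη₂ (sub_nonneg.2 hx1le)]
    have h1 : 0 ≤ η₁ - ξ₁ * s := by
      nlinarith [hkey, mul_nonneg hη₁ (by linarith : (0:ℝ) ≤ ξ₂ - η₂), hgt]
    have h2 : η₁ - ξ₁ * s ≤ ξ₂ := by
      nlinarith [hkey, mul_nonneg hη₂ (by linarith : (0:ℝ) ≤ η₁ - ξ₂), hgt]
    exact stmt13_aux η₁ η₂ ξ₁ ξ₂ s hsum hx1p hx2p hkey hs0 hs1 h1 h2 u u' hu hu'
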